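/- The potential kernel on the comb is linear in the backbone coordinate: for the simple random walk on the comb C₂, with A(x,o|z) = G(o,o|z)(1 - F₁(z)^{|x₂|}F₂(z)^{|x₁|}) as above, lim_{z→1⁻} A(x,o|z) = 2|x₁| for every x = (x₁,x₂) ∈ C₂. -/

import Mathlib

open Filter

/-- `F₁(z) = (1 - √(1-z²))/z`. -/
noncomputable def F1 (z : ℝ) : ℝ := (1 - Real.sqrt (1 - z ^ 2)) / z

/-- `F₂(z) = (1 + √(1-z²) - √2·√(1-z² + √(1-z²)))/z`. -/
noncomputable def F2 (z : ℝ) : ℝ :=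
  (1 + Real.sqrt (1 - z ^ 2) - Real.sqrt 2 * Real.sqrt (1 - z ^ 2 + Real.sqrt (1 - z ^ 2))) / z

/-- `G(o,o|z) = √2/√(1-z²+√(1-z²))` on the comb. -/
noncomputable def Goo (z : ℝ) : ℝ :=
  Real.sqrt 2 / Real.sqrt (1 - z ^ 2 + Real.sqrt (1 - z ^ 2))

/-- The generating function of the potential kernel on the comb,
`A(x,o|z) = G(o,o|z)(1 - F₁(z)^{|x₂|}F₂(z)^{|x₁|})`. -/
noncomputable def potKernelGF (x : ℤ × ℤ) (z : ℝ) : ℝ :=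
  Goo z * (1 - F1 z ^ x.2.natAbs * F2 z ^ x.1.natAbs)

/-- Auxiliary: the product `F₁^m F₂^n` after the substitution `t = (1-z²)^{1/4}`. -/
noncomputable def Pfun (m n : ℕ) (t : ℝ) : ℝ :=
  ((1 - t^2)/Real.sqrt (1 - t^4))^m *
  ((1 + t^2 - Real.sqrt 2 * t * Real.sqrt (t^2+1))/Real.sqrt (1 - t^4))^n

lemma P_deriv (m n : ℕ) : HasDerivAt (Pfun m n) (-(n * Real.sqrt 2)) 0 := by
  have hD : HasDerivAt (fun t : ℝ => Real.sqrt (1 - t^4)) 0 0 := by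
    have hin : HasDerivAt (fun t : ℝ => 1 - t^4) 0 0 := by
      simpa using ((hasDerivAt_pow 4 (0:ℝ)).const_sub 1)
    have hout : HasDerivAt Real.sqrt (1 / (2 * Real.sqrt (1 - (0:ℝ)^4))) (1 - (0:ℝ)^4) :=
      Real.hasDerivAt_sqrt (by norm_num)
    simpa [Function.comp_def] using hout.comp 0 hin
  have hS : HasDerivAt (fun t : ℝ => Real.sqrt (t^2+1)) 0 0 := by
    have hin : HasDerivAt (fun t : ℝ => t^2 + 1) 0 0 := by
      simpa using ((hasDerivAt_pow 2 (0:ℝ)).add_const 1)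
    have hout : HasDerivAt Real.sqrt (1 / (2 * Real.sqrt ((0:ℝ)^2+1))) ((0:ℝ)^2+1) :=
      Real.hasDerivAt_sqrt (by norm_num)
    simpa [Function.comp_def] using hout.comp 0 hin
  have hDne : Real.sqrt (1 - (0:ℝ)^4) ≠ 0 := by norm_num
  have hN1 : HasDerivAt (fun t : ℝ => 1 - t^2) 0 0 := by
    simpa using ((hasDerivAt_pow 2 (0:ℝ)).const_sub 1)
  have hN2 : HasDerivAt (fun t : ℝ => 1 + t^2 - Real.sqrt 2 * t * Real.sqrt (t^2+1))
      (-(Real.sqrt 2)) 0 := by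
    have ha : HasDerivAt (fun t : ℝ => 1 + t^2) 0 0 := by
      simpa using ((hasDerivAt_pow 2 (0:ℝ)).const_add 1)
    have hb : HasDerivAt (fun t : ℝ => Real.sqrt 2 * t) (Real.sqrt 2) 0 := by
      simpa using (hasDerivAt_id (0:ℝ)).const_mul (Real.sqrt 2)
    have hc : HasDerivAt (fun t : ℝ => Real.sqrt 2 * t * Real.sqrt (t^2+1)) (Real.sqrt 2) 0 := by
      have := hb.fun_mul hS
      simpa using this
    simpa using ha.fun_sub hc
  have hF1 : HasDerivAt (fun t : ℝ => (1 - t^2)/Real.sqrt (1 - t^4)) 0 0 := by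
    have := hN1.fun_div hD hDne
    simpa using this
  have hF2 : HasDerivAt (fun t : ℝ =>
      (1 + t^2 - Real.sqrt 2 * t * Real.sqrt (t^2+1))/Real.sqrt (1 - t^4))
      (-(Real.sqrt 2)) 0 := by
    have := hN2.fun_div hD hDne
    simp at this
    convert this using 1
  have h1 : HasDerivAt (fun t : ℝ => ((1 - t^2)/Real.sqrt (1 - t^4))^m) 0 0 := by
    have := hF1.fun_pow m
    simpa using this
  have h2 : HasDerivAt (fun t : ℝ =>
      ((1 + t^2 - Real.sqrt 2 * t * Real.sqrt (t^2+1))/Real.sqrt (1 - t^4))^n)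
      (-(n * Real.sqrt 2)) 0 := by
    have := hF2.fun_pow n
    refine this.congr_deriv ?_
    simp
  have := h1.fun_mul h2
  unfold Pfun
  refine this.congr_deriv ?_
  simp

/-- Auxiliary: the potential kernel generating function after substitution. -/
noncomputable def gfun (m n : ℕ) (t : ℝ) : ℝ :=
  Real.sqrt 2 / Real.sqrt (t^2 + 1) * ((1 - Pfun m n t) / t)

lemma g_limit (m n : ℕ) :
    Tendsto (gfun m n) (nhdsWithin 0 (Set.Ioi 0)) (nhds (2 * n)) := by
  have hP0 : Pfun m n 0 = 1 := by simp [Pfun]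
  have hslope : Tendsto (fun t : ℝ => (1 - Pfun m n t) / t) (nhdsWithin 0 {(0:ℝ)}ᶜ)
      (nhds (n * Real.sqrt 2)) := by
    have := hasDerivAt_iff_tendsto_slope.mp (P_deriv m n)
    have h2 := this.neg
    rw [show -(-(n * Real.sqrt 2)) = n * Real.sqrt 2 by ring] at h2
    refine h2.congr (fun t => ?_)
    simp [slope, hP0]
    ring_nf
  have hfac : Tendsto (fun t : ℝ => Real.sqrt 2 / Real.sqrt (t^2 + 1))
      (nhdsWithin 0 (Set.Ioi 0)) (nhds (Real.sqrt 2)) := by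
    have hc : ContinuousAt (fun t : ℝ => Real.sqrt 2 / Real.sqrt (t^2 + 1)) 0 := by
      apply ContinuousAt.div continuousAt_const
      · exact (Real.continuous_sqrt.comp (by continuity)).continuousAt
      · norm_num
    have := hc.tendsto
    simp only [Real.sqrt_one, div_one, show (0:ℝ)^2 + 1 = 1 by norm_num] at this
    exact this.mono_left nhdsWithin_le_nhds
  have hmain := hfac.mul (hslope.mono_left
    (nhdsWithin_mono 0 (fun t ht => ne_of_gt ht)))
  have : Real.sqrt 2 * (n * Real.sqrt 2) = 2 * n := by
    rw [show Real.sqrt 2 * (↑n * Real.sqrt 2) = Real.sqrt 2 * Real.sqrt 2 * n by ring,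
      Real.mul_self_sqrt (by norm_num)]
  rw [this] at hmain
  exact hmain

lemma subst_eq (m n : ℕ) {z : ℝ} (h0 : 0 < z) (h1 : z < 1) :
    Goo z * (1 - F1 z ^ m * F2 z ^ n) =
      gfun m n (Real.sqrt (Real.sqrt (1 - z^2))) := by
  set t := Real.sqrt (Real.sqrt (1 - z^2)) with htdef
  have hz2 : (0:ℝ) < 1 - z^2 := by nlinarith
  have ht2 : t^2 = Real.sqrt (1 - z^2) := Real.sq_sqrt (Real.sqrt_nonneg _)
  have ht4 : t^4 = 1 - z^2 := by
    have h : t^4 = (t^2)^2 := by ring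
    rw [h, ht2, Real.sq_sqrt hz2.le]
  have htpos : 0 < t := Real.sqrt_pos.mpr (Real.sqrt_pos.mpr hz2)
  have hz : Real.sqrt (1 - t^4) = z := by
    rw [ht4, show 1 - (1 - z^2) = z^2 by ring, Real.sqrt_sq h0.le]
  have hkey : Real.sqrt (1 - z^2 + Real.sqrt (1 - z^2)) = t * Real.sqrt (t^2 + 1) := by
    have hsq : Real.sqrt (t^4) = t^2 := by
      rw [show t^4 = (t^2)^2 by ring, Real.sqrt_sq (sq_nonneg t)]
    rw [← ht4, hsq, show t^4 + t^2 = t^2 * (t^2 + 1) by ring,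
      Real.sqrt_mul (sq_nonneg t), Real.sqrt_sq htpos.le]
  have hs : (0:ℝ) < Real.sqrt (t^2 + 1) := Real.sqrt_pos.mpr (by positivity)
  unfold Goo F1 F2 gfun Pfun
  rw [hkey, ← ht2, hz]
  field_simp

theorem comb_potential_kernel_limit (x : ℤ × ℤ) :
    Tendsto (fun z : ℝ => potKernelGF x z) (nhdsWithin 1 (Set.Iio 1))
      (nhds (2 * |(x.1 : ℝ)|)) := by
  have hcast : 2 * |(x.1 : ℝ)| = 2 * (x.1.natAbs : ℝ) := by
    simp [Nat.cast_natAbs]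
  rw [hcast]
  have hφ : Tendsto (fun z : ℝ => Real.sqrt (Real.sqrt (1 - z^2)))
      (nhdsWithin 1 (Set.Iio 1)) (nhdsWithin 0 (Set.Ioi 0)) := by
    rw [tendsto_nhdsWithin_iff]
    constructor
    · have hc : ContinuousAt (fun z : ℝ => Real.sqrt (Real.sqrt (1 - z^2))) 1 := by
        fun_prop
      have := hc.tendsto
      simp only [one_pow, sub_self, Real.sqrt_zero] at this
      exact this.mono_left nhdsWithin_le_nhds
    · filter_upwards [Ioo_mem_nhdsLT_of_mem (by norm_num : (1:ℝ) ∈ Set.Ioc 0 1)] with z hz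
      have : (0:ℝ) < 1 - z^2 := by nlinarith [hz.1, hz.2]
      exact Real.sqrt_pos.mpr (Real.sqrt_pos.mpr this)
  have hcomp := (g_limit x.2.natAbs x.1.natAbs).comp hφ
  refine hcomp.congr' ?_
  filter_upwards [Ioo_mem_nhdsLT_of_mem (by norm_num : (1:ℝ) ∈ Set.Ioc 0 1)] with z hz
  have := subst_eq x.2.natAbs x.1.natAbs hz.1 hz.2
  simp only [Function.comp, potKernelGF]
  exact this.symm
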